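/- Let M = ⊕_{k≥0} ℚ(q)·f^{(k)}m₀ be the Verma module over U_q(sl_2) with highest weight −n−2 (n ∈ ℤ⁺), where m₀ is a highest weight vector, realized inside its completion C(M) = ⊕_{k ≥ −n−1} ℚ(q)·f^{(k)}m₀ with f acting injectively. Then for 0 ≤ i ≤ n one has f^{(i)}·f^{(−n−1)}m₀ = a·q^{ni}·f^{(i−n−1)}m₀ for some unit a of 𝔸 (a rational function in 1 + q𝔸 up to sign), and for i ≥ n+1 one has f^{(i)}·f^{(−n−1)}m₀ = a·q^{(i−1)(n+1)}·f^{(i−n−1)}m₀ for some unit a of 𝔸. -/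

import Mathlib

open Polynomial

noncomputable section

abbrev K : Type := RatFunc ℚ

def q : K := RatFunc.X

/-- The subring `𝔸 ⊂ ℚ(q)` of rational functions regular at `q = 0`. -/
def 𝔸 : Subring K where
  carrier := {x : K | x.denom.eval 0 ≠ 0}
  zero_mem' := by simp [RatFunc.denom_zero]
  one_mem' := by simp [RatFunc.denom_one]
  add_mem' := by
    intro x y hx hy
    obtain ⟨c, hc⟩ := RatFunc.denom_add_dvd x y
    simp only [Set.mem_setOf_eq] at *
    intro h0
    exact mul_ne_zero hx hy (by
      rw [← Polynomial.eval_mul, hc, Polynomial.eval_mul, h0, zero_mul])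
  mul_mem' := by
    intro x y hx hy
    obtain ⟨c, hc⟩ := RatFunc.denom_mul_dvd x y
    simp only [Set.mem_setOf_eq] at *
    intro h0
    exact mul_ne_zero hx hy (by
      rw [← Polynomial.eval_mul, hc, Polynomial.eval_mul, h0, zero_mul])
  neg_mem' := by
    intro x hx
    have hneg : (-x) = (-1 : K) * x := by ring
    obtain ⟨c, hc⟩ := RatFunc.denom_mul_dvd (-1 : K) x
    rw [← hneg] at hc
    have hd1 : (-1 : K).denom = 1 := by
      have := RatFunc.denom_algebraMap (-1 : Polynomial ℚ)
      simpa using this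
    rw [hd1, one_mul] at hc
    simp only [Set.mem_setOf_eq] at *
    intro h0
    exact hx (by
      rw [hc, Polynomial.eval_mul, h0, zero_mul])

/-- Quantum integer `[k] = (q^k - q^{-k})/(q - q⁻¹)`. -/
def qint (k : ℤ) : K := (q ^ k - q ^ (-k)) / (q - q⁻¹)

/-- Quantum factorial `[n]! = [1][2]⋯[n]`. -/
def qfac : ℕ → K
  | 0 => 1
  | n + 1 => qfac n * qint (n + 1)

/-- Quantum binomial coefficient. -/
def qbinom (m n : ℕ) : K := qfac m / (qfac n * qfac (m - n))

end

noncomputable section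

/-- The formal factorial `[k]!` for `k ∈ ℤ`, with `[−k]! = (−1)^k [k]!` for `k > 0`. -/
def zfac (k : ℤ) : K :=
  if 0 ≤ k then qfac k.toNat else (-1) ^ (-k).toNat * qfac (-k).toNat

/-- The completion `C(M)` of the Verma module of highest weight `−n−2`, with
basis `v k = f^{(k)}m₀`, `k ≥ −n−1`, inside `ℤ →₀ ℚ(q)`. -/
abbrev CM : Type := ℤ →₀ K

def v (k : ℤ) : CM := Finsupp.single k 1

/-- `f^{(i)}·f^{(−n−1)}m₀ = ([i−n−1]!/([i]!·[−n−1]!))·f^{(i−n−1)}m₀`. -/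
def fdivApply (n i : ℕ) : CM :=
  (zfac ((i : ℤ) - n - 1) / (zfac i * zfac (-(n : ℤ) - 1))) • v ((i : ℤ) - n - 1)

def IsAUnit (x : K) : Prop := x ∈ 𝔸 ∧ ∃ b ∈ 𝔸, x * b = 1

lemma mem_A_div (p r : ℚ[X]) (hr : r.eval 0 ≠ 0) :
    (algebraMap ℚ[X] K p / algebraMap ℚ[X] K r) ∈ 𝔸 := by
  obtain ⟨c, hc⟩ := RatFunc.denom_div_dvd (K := ℚ) p r
  show _ ≠ 0
  intro h0
  apply hr
  rw [hc, Polynomial.eval_mul, h0, zero_mul]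

lemma isAUnit_div (p r : ℚ[X]) (hp : p.eval 0 ≠ 0) (hr : r.eval 0 ≠ 0) :
    IsAUnit (algebraMap ℚ[X] K p / algebraMap ℚ[X] K r) := by
  refine ⟨mem_A_div p r hr, algebraMap ℚ[X] K r / algebraMap ℚ[X] K p, mem_A_div r p hp, ?_⟩
  have hp0 : algebraMap ℚ[X] K p ≠ 0 := by
    intro h
    have hz : p = 0 := RatFunc.algebraMap_injective ℚ (by simpa using h)
    rw [hz] at hp; simp at hp
  have hr0 : algebraMap ℚ[X] K r ≠ 0 := by
    intro h
    have hz : r = 0 := RatFunc.algebraMap_injective ℚ (by simpa using h)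
    rw [hz] at hr; simp at hr
  field_simp

lemma isAUnit_alg (p : ℚ[X]) (hp : p.eval 0 ≠ 0) : IsAUnit (algebraMap ℚ[X] K p) := by
  have h1 : (1 : ℚ[X]).eval 0 ≠ 0 := by norm_num
  have := isAUnit_div p 1 hp h1
  simpa using this

lemma IsAUnit.mul {x y : K} (hx : IsAUnit x) (hy : IsAUnit y) : IsAUnit (x * y) := by
  obtain ⟨hxA, bx, hbx, hbx1⟩ := hx
  obtain ⟨hyA, cy, hby, hby1⟩ := hy
  exact ⟨mul_mem hxA hyA, bx * cy, mul_mem hbx hby, by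
    calc x * y * (bx * cy) = (x * bx) * (y * cy) := by ring
    _ = 1 := by rw [hbx1, hby1, one_mul]⟩

lemma IsAUnit.ne_zero {x : K} (hx : IsAUnit x) : x ≠ 0 := by
  obtain ⟨-, b, -, h⟩ := hx
  intro h0; rw [h0, zero_mul] at h; exact zero_ne_one (α := K) h

lemma isAUnit_one : IsAUnit (1 : K) := ⟨one_mem _, 1, one_mem _, by ring⟩

lemma isAUnit_neg_one : IsAUnit (-1 : K) := ⟨neg_mem (one_mem _), -1, neg_mem (one_mem _), by ring⟩

lemma isAUnit_neg_one_pow (k : ℕ) : IsAUnit ((-1 : K) ^ k) := by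
  induction k with
  | zero => rw [pow_zero]; exact isAUnit_one
  | succ m ih => rw [pow_succ]; exact ih.mul isAUnit_neg_one

lemma q_ne_zero : q ≠ 0 := by
  simpa [q] using RatFunc.X_ne_zero (K := ℚ)

def S (k : ℕ) : ℚ[X] := ∑ j ∈ Finset.range k, X ^ (2 * j)

lemma S_eval (k : ℕ) : (S (k + 1)).eval 0 = 1 := by
  simp [S, Finset.sum_range_succ', Polynomial.eval_finset_sum]

lemma q_sq_sub_one_ne : q ^ 2 - 1 ≠ (0 : K) := by
  rw [sub_ne_zero]
  intro h
  have h2 : (X ^ 2 : ℚ[X]) = 1 := by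
    apply RatFunc.algebraMap_injective ℚ
    rw [map_pow, map_one, RatFunc.algebraMap_X]
    exact h
  have := congrArg (fun p => Polynomial.coeff p 0) h2
  simp [coeff_X_pow] at this

lemma hden : q - q⁻¹ ≠ (0 : K) := by
  rw [sub_ne_zero]
  intro h
  apply q_sq_sub_one_ne
  rw [sub_eq_zero, sq]
  nth_rewrite 2 [h]
  rw [mul_inv_cancel₀ q_ne_zero]

lemma alg_S (k : ℕ) : algebraMap ℚ[X] K (S k) = ∑ j ∈ Finset.range k, q ^ (2 * j) := by
  rw [S, map_sum]
  exact Finset.sum_congr rfl fun j _ => by rw [map_pow, RatFunc.algebraMap_X, q]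

lemma hgeom (m : ℕ) : (q ^ 2 - 1) * algebraMap ℚ[X] K (S (m + 1)) = q ^ (2 * (m + 1)) - 1 := by
  rw [alg_S, pow_mul]
  calc (q ^ 2 - 1) * ∑ j ∈ Finset.range (m+1), q ^ (2 * j)
      = (∑ j ∈ Finset.range (m+1), (q ^ 2) ^ j) * (q ^ 2 - 1) := by
        rw [mul_comm]; congr 1; exact Finset.sum_congr rfl fun j _ => (pow_mul q 2 j)
    _ = (q ^ 2) ^ (m + 1) - 1 := geom_sum_mul (q ^ 2) (m + 1)

lemma qint_mul (m : ℕ) : qint ((m : ℤ) + 1) * q ^ m = algebraMap ℚ[X] K (S (m + 1)) := by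
  have h1 := hgeom m
  have hq := q_ne_zero
  rw [qint, show ((m:ℤ)+1) = ((m+1:ℕ):ℤ) by push_cast; ring, zpow_neg, zpow_natCast,
    div_mul_eq_mul_div, div_eq_iff hden]
  have hpow : (q : K) ^ (m+1) ≠ 0 := pow_ne_zero _ hq
  field_simp
  rw [two_mul, pow_add] at h1
  linear_combination (-(q ^ (m + 1))) * h1

/-- `e k = 0 + 1 + ⋯ + (k-1)`, so `[k]! = q^{-e k}·(unit)`. -/
def e (k : ℕ) : ℕ := ∑ j ∈ Finset.range k, j

lemma e_two (k : ℕ) : ((e k : ℤ)) * 2 = (k : ℤ) * ((k : ℤ) - 1) := by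
  match k with
  | 0 => simp [e]
  | k + 1 =>
    have := Finset.sum_range_id_mul_two (k + 1)
    have h : (e (k+1)) * 2 = (k+1) * k := by simpa [e] using this
    have h2 := congrArg (Nat.cast : ℕ → ℤ) h
    push_cast at h2 ⊢
    linear_combination h2

lemma qfac_unit (k : ℕ) : ∃ u, IsAUnit u ∧ qfac k * q ^ (e k) = u := by
  induction k with
  | zero => exact ⟨1, isAUnit_one, by simp [qfac, e]⟩
  | succ m ih =>
    obtain ⟨u, hu, hequ⟩ := ih
    refine ⟨u * algebraMap ℚ[X] K (S (m + 1)),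
      hu.mul (isAUnit_alg _ (by rw [S_eval]; norm_num)), ?_⟩
    have h1 := qint_mul m
    rw [show qfac (m+1) = qfac m * qint ((m:ℤ) + 1) by
        show qfac m * qint _ = _; norm_num,
      show e (m+1) = e m + m from Finset.sum_range_succ _ _, pow_add, ← hequ, ← h1]
    ring

lemma qfac_ne_zero (k : ℕ) : qfac k ≠ 0 := by
  obtain ⟨u, hu, h⟩ := qfac_unit k
  intro h0
  rw [h0, zero_mul] at h
  exact hu.ne_zero h.symm

lemma calc_main (a b c : ℕ) (s t : K) (hs : IsAUnit s) (ht : IsAUnit t) (E : ℤ)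
    (hE : E + (e a : ℤ) = (e b : ℤ) + (e c : ℤ)) :
    ∃ A, IsAUnit A ∧ (s * qfac a) / (qfac b * (t * qfac c)) = A * q ^ E := by
  obtain ⟨ua, hua, ha⟩ := qfac_unit a
  obtain ⟨ub, hub, hb⟩ := qfac_unit b
  obtain ⟨uc, huc, hc⟩ := qfac_unit c
  obtain ⟨hubA, bb, hbb, hbb1⟩ := hub
  obtain ⟨htA, bt, hbt, hbt1⟩ := ht
  obtain ⟨hucA, bc, hbc, hbc1⟩ := huc
  have hubu : IsAUnit ub := ⟨hubA, bb, hbb, hbb1⟩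
  have hucu : IsAUnit uc := ⟨hucA, bc, hbc, hbc1⟩
  have hbbu : IsAUnit bb := ⟨hbb, ub, hubA, by rw [mul_comm]; exact hbb1⟩
  have hbtu : IsAUnit bt := ⟨hbt, t, htA, by rw [mul_comm]; exact hbt1⟩
  have hbcu : IsAUnit bc := ⟨hbc, uc, hucA, by rw [mul_comm]; exact hbc1⟩
  refine ⟨s * ua * bb * bt * bc, (((hs.mul hua).mul hbbu).mul hbtu).mul hbcu, ?_⟩
  have hq := q_ne_zero
  have hqa : qfac a = ua / q ^ (e a) := by
    rw [eq_div_iff (pow_ne_zero _ hq)]; exact ha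
  have hqb : qfac b = ub / q ^ (e b) := by
    rw [eq_div_iff (pow_ne_zero _ hq)]; exact hb
  have hqc : qfac c = uc / q ^ (e c) := by
    rw [eq_div_iff (pow_ne_zero _ hq)]; exact hc
  have hbbe : bb = ub⁻¹ := eq_inv_of_mul_eq_one_right hbb1
  have hbte : bt = t⁻¹ := eq_inv_of_mul_eq_one_right hbt1
  have hbce : bc = uc⁻¹ := eq_inv_of_mul_eq_one_right hbc1
  have hEeq : E = ((e b + e c : ℕ) : ℤ) - ((e a : ℕ) : ℤ) := by push_cast; omega
  rw [hqa, hqb, hqc, hbbe, hbte, hbce, hEeq, zpow_sub₀ hq, zpow_natCast, zpow_natCast, pow_add]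
  have hub0 : ub ≠ 0 := hubu.ne_zero
  have huc0 : uc ≠ 0 := hucu.ne_zero
  have ht0 : t ≠ 0 := IsAUnit.ne_zero ⟨htA, bt, hbt, hbt1⟩
  field_simp


lemma zfac_natCast (k : ℕ) : zfac (k : ℤ) = qfac k := by
  rw [zfac, if_pos (Int.natCast_nonneg k)]
  simp

lemma zfac_neg (k : ℕ) : zfac (-(k : ℤ) - 1) = (-1) ^ (k + 1) * qfac (k + 1) := by
  rw [zfac, if_neg (by omega)]
  have h : (-(-(k:ℤ) - 1)).toNat = k + 1 := by omega
  rw [h]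

/-- For `0 ≤ i ≤ n`, `f^{(i)}·f^{(−n−1)}m₀ = a·q^{ni}·f^{(i−n−1)}m₀` for some unit
`a ∈ 𝔸^×`, and for `i ≥ n+1`, `f^{(i)}·f^{(−n−1)}m₀ = a·q^{(i−1)(n+1)}·f^{(i−n−1)}m₀`
for some unit `a ∈ 𝔸^×`. -/
theorem fdiv_on_completion (n i : ℕ) :
    (i ≤ n → ∃ a ∈ 𝔸, (∃ b ∈ 𝔸, a * b = 1) ∧
      fdivApply n i = (a * q ^ ((n : ℤ) * i)) • v ((i : ℤ) - n - 1)) ∧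
    (n + 1 ≤ i → ∃ a ∈ 𝔸, (∃ b ∈ 𝔸, a * b = 1) ∧
      fdivApply n i = (a * q ^ (((i : ℤ) - 1) * ((n : ℤ) + 1))) • v ((i : ℤ) - n - 1)) := by
  constructor
  · intro hi
    have hz1 : zfac ((i:ℤ) - n - 1) = (-1) ^ (n - i + 1) * qfac (n - i + 1) := by
      rw [show ((i:ℤ) - n - 1) = -((n - i : ℕ) : ℤ) - 1 by omega]
      exact zfac_neg (n - i)
    have hz2 : zfac (i : ℤ) = qfac i := zfac_natCast i
    have hz3 : zfac (-(n:ℤ) - 1) = (-1) ^ (n + 1) * qfac (n + 1) := zfac_neg n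
    have hE : ((n:ℤ) * i) + (e (n - i + 1) : ℤ) = (e i : ℤ) + (e (n + 1) : ℤ) := by
      have h2a := e_two (n - i + 1)
      have h2b := e_two i
      have h2c := e_two (n + 1)
      have hc : ((n - i : ℕ) : ℤ) = (n : ℤ) - i := by omega
      have key : 2 * (((n:ℤ) * i) + (e (n - i + 1) : ℤ)) = 2 * ((e i : ℤ) + (e (n + 1) : ℤ)) := by
        push_cast [hc] at h2a h2b h2c
        linear_combination h2a - h2b - h2c
      linarith [key]
    obtain ⟨A, hA, hAe⟩ := calc_main (n - i + 1) i (n + 1) ((-1) ^ (n - i + 1)) ((-1) ^ (n + 1))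
      (isAUnit_neg_one_pow _) (isAUnit_neg_one_pow _) ((n:ℤ) * i) hE
    refine ⟨A, hA.1, hA.2, ?_⟩
    unfold fdivApply
    congr 1
    rw [hz1, hz2, hz3]
    exact hAe
  · intro hi
    have hz1 : zfac ((i:ℤ) - n - 1) = qfac (i - n - 1) := by
      rw [show ((i:ℤ) - n - 1) = ((i - n - 1 : ℕ) : ℤ) by omega]
      exact zfac_natCast (i - n - 1)
    have hz2 : zfac (i : ℤ) = qfac i := zfac_natCast i
    have hz3 : zfac (-(n:ℤ) - 1) = (-1) ^ (n + 1) * qfac (n + 1) := zfac_neg n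
    have hE : (((i:ℤ) - 1) * ((n:ℤ) + 1)) + (e (i - n - 1) : ℤ) = (e i : ℤ) + (e (n + 1) : ℤ) := by
      have h2a := e_two (i - n - 1)
      have h2b := e_two i
      have h2c := e_two (n + 1)
      have hc : ((i - n - 1 : ℕ) : ℤ) = (i : ℤ) - n - 1 := by omega
      have key : 2 * ((((i:ℤ) - 1) * ((n:ℤ) + 1)) + (e (i - n - 1) : ℤ))
          = 2 * ((e i : ℤ) + (e (n + 1) : ℤ)) := by
        push_cast [hc] at h2a h2b h2c
        linear_combination h2a - h2b - h2c
      linarith [key]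
    obtain ⟨A, hA, hAe⟩ := calc_main (i - n - 1) i (n + 1) 1 ((-1) ^ (n + 1))
      isAUnit_one (isAUnit_neg_one_pow _) (((i:ℤ) - 1) * ((n:ℤ) + 1)) hE
    rw [one_mul] at hAe
    refine ⟨A, hA.1, hA.2, ?_⟩
    unfold fdivApply
    congr 1
    rw [hz1, hz2, hz3]
    exact hAe


end
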